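/- An irreducible square matrix that is weakly diagonally dominant in every row and strictly diagonally dominant in at least one row is invertible (Taussky's theorem). -/

import Mathlib

open Finset in
/-- Taussky's theorem: an irreducible square complex matrix that is weakly
diagonally dominant in every row and strictly diagonally dominant in at least
one row is invertible. Irreducibility is expressed by strong connectivity of
the directed graph with an edge `i → j` whenever `A i j ≠ 0`. -/
theorem taussky_irreducible_diagonally_dominant (n : ℕ)
    (A : Matrix (Fin n) (Fin n) ℂ)
    (hirr : ∀ i j : Fin n, Relation.ReflTransGen (fun a b => A a b ≠ 0) i j)
    (hdom : ∀ i : Fin n, ∑ j ∈ univ.erase i, ‖A i j‖ ≤ ‖A i i‖)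
    (hstrict : ∃ i : Fin n, ∑ j ∈ univ.erase i, ‖A i j‖ < ‖A i i‖) :
    IsUnit A := by
  rw [Matrix.isUnit_iff_isUnit_det, isUnit_iff_ne_zero]
  intro hdet
  obtain ⟨x, hx, hAx⟩ := Matrix.exists_mulVec_eq_zero_iff.mpr hdet
  obtain ⟨i0, hi0⟩ := hstrict
  obtain ⟨m, -, hm⟩ := Finset.exists_max_image (univ : Finset (Fin n))
    (fun i => ‖x i‖) ⟨i0, mem_univ _⟩
  set M := ‖x m‖ with hMdef
  have hm' : ∀ j, ‖x j‖ ≤ M := fun j => hm j (mem_univ _)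
  have hMpos : 0 < M := by
    obtain ⟨k, hk⟩ := Function.ne_iff.mp hx
    exact lt_of_lt_of_le (by simpa using (norm_pos_iff.mpr hk)) (hm' k)
  have hchain : ∀ i, ‖x i‖ = M →
      ‖A i i‖ * M ≤ ∑ k ∈ univ.erase i, ‖A i k‖ * ‖x k‖ := by
    intro i hi
    have hrow : ∑ k, A i k * x k = 0 := by
      have := congrFun hAx i
      simpa [Matrix.mulVec, dotProduct] using this
    have hsplit : A i i * x i = -∑ k ∈ univ.erase i, A i k * x k := by
      have h := Finset.add_sum_erase univ (fun k => A i k * x k) (mem_univ i)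
      rw [hrow] at h
      linear_combination h
    calc ‖A i i‖ * M = ‖A i i * x i‖ := by rw [norm_mul, hi]
      _ = ‖∑ k ∈ univ.erase i, A i k * x k‖ := by
          rw [hsplit, norm_neg]
      _ ≤ ∑ k ∈ univ.erase i, ‖A i k * x k‖ :=
          norm_sum_le _ _
      _ = ∑ k ∈ univ.erase i, ‖A i k‖ * ‖x k‖ := by
          simp [norm_mul]
  have key : ∀ i, ‖x i‖ = M → ∀ j, A i j ≠ 0 → ‖x j‖ = M := by
    intro i hi j hAij
    by_cases hji : j = i
    · subst hji; exact hi
    have h1 := hchain i hi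
    have h2 : ∑ k ∈ univ.erase i, ‖A i k‖ * ‖x k‖
        ≤ ∑ k ∈ univ.erase i, ‖A i k‖ * M :=
      Finset.sum_le_sum fun k _ => mul_le_mul_of_nonneg_left (hm' k) (norm_nonneg _)
    have h3 : ∑ k ∈ univ.erase i, ‖A i k‖ * M ≤ ‖A i i‖ * M := by
      rw [← Finset.sum_mul]
      exact mul_le_mul_of_nonneg_right (hdom i) hMpos.le
    have heq : ∑ k ∈ univ.erase i, ‖A i k‖ * ‖x k‖
        = ∑ k ∈ univ.erase i, ‖A i k‖ * M :=
      le_antisymm h2 (le_trans h3 h1)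
    have hall := (Finset.sum_eq_sum_iff_of_le
      (fun k _ => mul_le_mul_of_nonneg_left (hm' k) (norm_nonneg _))).mp heq
    have hj := hall j (mem_erase.mpr ⟨hji, mem_univ _⟩)
    have hAne : ‖A i j‖ ≠ 0 := by
      simpa using hAij
    exact mul_left_cancel₀ hAne hj
  have hreach : ∀ j, Relation.ReflTransGen (fun a b => A a b ≠ 0) m j →
      ‖x j‖ = M := by
    intro j h
    induction h with
    | refl => rfl
    | tail _ hbc ih => exact key _ ih _ hbc
  have hi0M : ‖x i0‖ = M := hreach i0 (hirr m i0)
  have h1 := hchain i0 hi0M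
  have h2 : ∑ k ∈ univ.erase i0, ‖A i0 k‖ * ‖x k‖
      ≤ (∑ k ∈ univ.erase i0, ‖A i0 k‖) * M := by
    rw [Finset.sum_mul]
    exact Finset.sum_le_sum fun k _ => mul_le_mul_of_nonneg_left (hm' k) (norm_nonneg _)
  have h3 : (∑ k ∈ univ.erase i0, ‖A i0 k‖) * M < ‖A i0 i0‖ * M :=
    mul_lt_mul_of_pos_right hi0 hMpos
  exact absurd (lt_of_le_of_lt (le_trans h1 h2) h3) (lt_irrefl _)
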